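/- Let 𝔗 be a C*-algebra and φ : 𝔗 → ℂ a bounded linear functional with weak-* continuous extension φ̂ to the bidual 𝔗**. If ω : 𝔗** → ℂ is a positive linear functional with ‖ω‖ = ‖φ‖ such that |φ̂(ξ)|² ≤ ‖φ‖ · ω(ξξ*) for every ξ ∈ 𝔗**, then ω equals the absolute value |φ| arising from the polar decomposition of φ. -/

import Mathlib

open ComplexOrder Filter Topology

section AbsValue

variable (M : Type*) [NormedRing M] [StarRing M] [NormedAlgebra ℂ M]

/-- `absΦ` is the absolute value (from the polar decomposition) of the weak-*
continuous functional `Φ` on the von Neumann algebra `M`, with partial isometry `v`: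
`Φ = absΦ(· v)`, `absΦ` is positive, and `M(1 - v*v) = {ξ | absΦ(ξ*ξ) = 0}`. -/
def IsAbsValue (Φ absΦ : M →L[ℂ] ℂ) (v : M) : Prop :=
  v * star v * v = v ∧
  (∀ ξ : M, 0 ≤ absΦ (star ξ * ξ)) ∧
  (∀ ξ : M, Φ ξ = absΦ (ξ * v)) ∧
  (∀ ξ : M, absΦ (star ξ * ξ) = 0 ↔ ξ * (star v * v) = 0)

end AbsValue

section Setup

variable (T M : Type*) [NormedRing T] [StarRing T] [NormedAlgebra ℂ T]
  [NormedRing M] [StarRing M] [NormedAlgebra ℂ M]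

/-- Abstract model of the canonical inclusion `ι` of a unital C*-algebra `T` into its
bidual von Neumann algebra `M = T**`, together with the weak-* continuous extension
`hat φ` of each bounded functional `φ` on `T`, and the polar decomposition data
(`absVal φ = |φ|`, with partial isometry `pIso φ`). -/
structure BidualSetup where
  ι : T →L[ℂ] M
  ι_mul : ∀ s t : T, ι (s * t) = ι s * ι t
  ι_star : ∀ t : T, ι (star t) = star (ι t)
  ι_one : ι 1 = 1
  ι_isom : ∀ t : T, ‖ι t‖ = ‖t‖
  hat : (T →L[ℂ] ℂ) →ₗ[ℂ] (M →L[ℂ] ℂ)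
  hat_ext : ∀ (φ : T →L[ℂ] ℂ) (t : T), hat φ (ι t) = φ t
  hat_norm : ∀ φ : T →L[ℂ] ℂ, ‖hat φ‖ = ‖φ‖
  absVal : (T →L[ℂ] ℂ) → (M →L[ℂ] ℂ)
  pIso : (T →L[ℂ] ℂ) → M
  polar : ∀ φ : T →L[ℂ] ℂ, IsAbsValue M (hat φ) (absVal φ) (pIso φ)

end Setup

section AC

variable {T M : Type*} [NormedRing T] [StarRing T] [NormedAlgebra ℂ T]
  [NormedRing M] [StarRing M] [NormedAlgebra ℂ M]

/-- `φ` is absolutely continuous with respect to `ψ`: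
`|ψ|(ξ*ξ) = 0` implies `|φ|(ξ*ξ) = 0` for all `ξ ∈ T**`. -/
def AbsCont (B : BidualSetup T M) (φ ψ : T →L[ℂ] ℂ) : Prop :=
  ∀ ξ : M, B.absVal ψ (star ξ * ξ) = 0 → B.absVal φ (star ξ * ξ) = 0

/-- The support projection `s_φ = v_φ* v_φ` of a functional `φ` on `T`. -/
def suppProj (B : BidualSetup T M) (φ : T →L[ℂ] ℂ) : M :=
  star (B.pIso φ) * B.pIso φ

/-- A state on a unital C*-algebra: a positive unital functional. -/
def IsStateOn (δ : T →L[ℂ] ℂ) : Prop :=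
  (∀ t : T, 0 ≤ δ (star t * t)) ∧ δ 1 = 1

end AC




section Helpers

variable {M : Type*} [NormedRing M] [StarRing M] [NormedAlgebra ℂ M] [StarModule ℂ M]

private lemma pos_im {z : ℂ} (hz : 0 ≤ z) : z.im = 0 := (Complex.nonneg_iff.mp hz).2.symm
private lemma pos_re {z : ℂ} (hz : 0 ≤ z) : 0 ≤ z.re := (Complex.nonneg_iff.mp hz).1
private lemma pos_norm {z : ℂ} (hz : 0 ≤ z) : ‖z‖ = z.re := by
  have h1 := pos_im hz
  have h2 := pos_re hz
  rw [← Complex.re_add_im z, h1]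
  simp [abs_of_nonneg h2]
private lemma pos_eq_re {z : ℂ} (hz : 0 ≤ z) : z = (z.re : ℂ) :=
  Complex.ext (by simp) (by simp [pos_im hz])

/-- A positive functional on a complex star algebra is hermitian. -/
private lemma herm (f : M →L[ℂ] ℂ) (hf : ∀ ξ : M, 0 ≤ f (star ξ * ξ)) (ξ : M) :
    f (star ξ) = starRingEnd ℂ (f ξ) := by
  have key : ∀ h : M, star h = h → (f h).im = 0 := by
    intro h hh
    have e : star (1 + h) * (1 + h) - star (1 - h) * (1 - h) = h + h + h + h := by
      rw [star_add, star_one, hh, star_sub, star_one, hh]; noncomm_ring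
    have he := congrArg (f ·) e
    simp only [map_sub, map_add] at he
    have h1 := pos_im (hf (1 + h))
    have h2 := pos_im (hf (1 - h))
    have h3 : (f (star (1+h) * (1+h))).im - (f (star (1-h) * (1-h))).im = 4 * (f h).im := by
      have := congrArg Complex.im he
      simp only [Complex.sub_im, Complex.add_im] at this ⊢
      linarith
    rw [h1, h2] at h3
    linarith
  have hsa : star (ξ + star ξ) = ξ + star ξ := by simp [add_comm]
  have hsb : star ((Complex.I : ℂ) • (ξ - star ξ)) = (Complex.I : ℂ) • (ξ - star ξ) := by
    rw [star_smul, star_sub, star_star]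
    simp only [Complex.star_def, Complex.conj_I, neg_smul, smul_sub, neg_sub]
    abel
  have k1 := key _ hsa
  have k2 := key _ hsb
  rw [map_add] at k1
  rw [map_smul, map_sub] at k2
  set z := f ξ; set w := f (star ξ)
  have k1' : z.im + w.im = 0 := by simpa using k1
  have k2' : z.re - w.re = 0 := by
    have : (Complex.I * (z - w)).im = 0 := by simpa using k2
    simpa [Complex.mul_im] using this
  apply Complex.ext <;> simp [Complex.conj_re, Complex.conj_im] <;> linarith

/-- Cauchy-Schwarz for a positive functional. -/
private lemma cs (f : M →L[ℂ] ℂ) (hf : ∀ ξ : M, 0 ≤ f (star ξ * ξ)) (a b : M) :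
    ‖f (star a * b)‖ ^ 2 ≤ (f (star a * a)).re * (f (star b * b)).re := by
  set z := f (star a * b) with hz
  set p := (f (star a * a)).re with hp
  set q := (f (star b * b)).re with hq
  have hp0 : 0 ≤ p := pos_re (hf a)
  have hq0 : 0 ≤ q := pos_re (hf b)
  have key : ∀ c : ℂ, 0 ≤ p + 2 * (c * z).re + Complex.normSq c * q := by
    intro c
    have expand : star (a + c • b) * (a + c • b)
        = star a * a + (starRingEnd ℂ c) • (star b * a) + c • (star a * b)
          + (c * starRingEnd ℂ c) • (star b * b) := by
      rw [star_add, star_smul]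
      simp only [add_mul, mul_add, smul_add, smul_mul_assoc, mul_smul_comm, smul_smul,
        Complex.star_def]
      abel
    have hpos := hf (a + c • b)
    rw [expand] at hpos
    simp only [map_add, map_smul, smul_eq_mul] at hpos
    have hba : f (star b * a) = starRingEnd ℂ z := by
      have h' := herm f hf (star a * b)
      rw [star_mul, star_star] at h'
      exact h'
    rw [hba] at hpos
    have him2 := pos_im (hf b)
    have hre := pos_re hpos
    have h1 : ((starRingEnd ℂ c) * starRingEnd ℂ z).re = (c * z).re := by
      rw [← RingHom.map_mul]
      simp
    have h2 : ((c * starRingEnd ℂ c) * f (star b * b)).re = Complex.normSq c * q := by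
      have e : (c * starRingEnd ℂ c) = (Complex.normSq c : ℂ) := Complex.mul_conj c
      rw [e, Complex.mul_re]
      simp [him2, hq]
    simp only [Complex.add_re, h1, h2] at hre
    linarith
  have key' : ∀ t : ℝ, 0 ≤ p - 2 * t * Complex.normSq z + t ^ 2 * Complex.normSq z * q := by
    intro t
    have h := key (-(t : ℂ) * starRingEnd ℂ z)
    have e1 : ((-(t : ℂ) * starRingEnd ℂ z) * z).re = -t * Complex.normSq z := by
      simp [Complex.mul_re, Complex.mul_im, Complex.normSq_apply]
      ring
    have e2 : Complex.normSq (-(t : ℂ) * starRingEnd ℂ z) = t ^ 2 * Complex.normSq z := by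
      rw [Complex.normSq_mul, Complex.normSq_conj, Complex.normSq_neg, Complex.normSq_ofReal]
      ring
    rw [e1, e2] at h
    linarith
  have habs : ‖z‖ ^ 2 = Complex.normSq z := by
    rw [Complex.sq_norm]
  rw [habs]
  set nz := Complex.normSq z with hnzdef
  have hnz0 : 0 ≤ nz := Complex.normSq_nonneg z
  rcases eq_or_lt_of_le hnz0 with hnz | hnz
  · rw [← hnz]; exact mul_nonneg hp0 hq0
  rcases eq_or_lt_of_le hq0 with hq' | hq'
  · exfalso
    have h := key' ((p + 1) / (2 * nz))
    rw [← hq'] at h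
    have : 2 * ((p + 1) / (2 * nz)) * nz = p + 1 := by
      field_simp
    nlinarith
  · have h := key' (1 / q)
    have e : (1 / q) ^ 2 * nz * q = nz / q := by
      field_simp
    rw [e] at h
    have h4 : 2 * (1 / q) * nz = 2 * nz / q := by ring
    rw [h4] at h
    have h3 : 2 * nz / q = 2 * (nz / q) := by ring
    have h2 : nz / q ≤ p := by linarith
    have := (div_le_iff₀ hq').mp h2
    linarith

/-- If `f (star x * x) = 0` for a positive functional, then `f (ξ * x) = 0` for all `ξ`. -/
private lemma mul_right_zero (f : M →L[ℂ] ℂ) (hf : ∀ ξ : M, 0 ≤ f (star ξ * ξ)) {x : M}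
    (hx : f (star x * x) = 0) (ξ : M) : f (ξ * x) = 0 := by
  have h := cs f hf (star ξ) x
  rw [star_star, hx] at h
  simp only [Complex.zero_re, mul_zero] at h
  have : ‖f (ξ * x)‖ = 0 := by nlinarith [norm_nonneg (f (ξ * x))]
  exact norm_eq_zero.mp this

end Helpers

set_option maxHeartbeats 1600000 in
private lemma core {M : Type*} [NormedRing M] [StarRing M] [CStarRing M]
    [NormedAlgebra ℂ M] [StarModule ℂ M]
    (Φ A ω : M →L[ℂ] ℂ) (v : M) (c : ℝ)
    (hv : v * star v * v = v)
    (hApos : ∀ ξ : M, 0 ≤ A (star ξ * ξ))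
    (hΦA : ∀ ξ : M, Φ ξ = A (ξ * v))
    (hker : ∀ ξ : M, A (star ξ * ξ) = 0 ↔ ξ * (star v * v) = 0)
    (hΦnorm : ‖Φ‖ = c)
    (hωpos : ∀ ξ : M, 0 ≤ ω (star ξ * ξ))
    (hωnorm : ‖ω‖ = c)
    (hSchwarz : ∀ ξ : M, ‖Φ ξ‖ ^ 2 ≤ c * ‖ω (ξ * star ξ)‖) :
    ω = A := by
  -- basic facts about the support projection s = v* v
  have hs2 : star v * v * (star v * v) = star v * v := by
    calc star v * v * (star v * v) = star v * (v * star v * v) := by noncomm_ring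
    _ = star v * v := by rw [hv]
  have hss : star (star v * v) = star v * v := by rw [star_mul, star_star]
  have h1s : (1 - star v * v) * (1 - star v * v) = 1 - star v * v := by
    rw [sub_mul, one_mul, mul_sub, mul_one, hs2, sub_self, sub_zero]
  have h1ss : star (1 - star v * v) * (1 - star v * v) = 1 - star v * v := by
    rw [star_sub, star_one, hss, h1s]
  -- A (ξ * (v* v)) = A ξ
  have hker1 : A (star (1 - star v * v) * (1 - star v * v)) = 0 := by
    apply (hker (1 - star v * v)).mpr
    rw [sub_mul, one_mul, hs2, sub_self]
  have hA1s : ∀ ξ : M, A (ξ * (1 - star v * v)) = 0 :=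
    mul_right_zero A hApos hker1
  have hAs : ∀ ξ : M, A (ξ * (star v * v)) = A ξ := by
    intro ξ
    have h := hA1s ξ
    rw [mul_sub, mul_one, map_sub, sub_eq_zero] at h
    exact h.symm
  -- A ξ = Φ (ξ * v*)
  have hAΦ : ∀ ξ : M, A ξ = Φ (ξ * star v) := by
    intro ξ
    rw [hΦA (ξ * star v), mul_assoc, hAs]
  by_cases hc : c = 0
  · -- degenerate case: everything is zero
    have hΦ0 : Φ = 0 := by
      rw [← norm_eq_zero, hΦnorm]; exact hc
    have hω0 : ω = 0 := by
      rw [← norm_eq_zero, hωnorm]; exact hc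
    ext ξ
    rw [hω0, hAΦ ξ, hΦ0]
    simp
  have hcpos : 0 < c := lt_of_le_of_ne (hΦnorm ▸ norm_nonneg Φ) (Ne.symm hc)
  -- M is nontrivial, so ‖1‖ = 1
  have hΦne : Φ ≠ 0 := by
    intro h
    rw [h, norm_zero] at hΦnorm
    exact hc hΦnorm.symm
  obtain ⟨ξ₀, hξ₀⟩ : ∃ ξ : M, Φ ξ ≠ 0 := by
    by_contra h
    push_neg at h
    exact hΦne (ContinuousLinearMap.ext fun ξ => by rw [h ξ]; rfl)
  haveI : Nontrivial M := nontrivial_of_ne ξ₀ 0 (by rintro rfl; simp at hξ₀)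
  have hone : ‖(1 : M)‖ = 1 := CStarRing.norm_one
  -- ‖v‖ ≤ 1
  have hvle : ‖v‖ ≤ 1 := by
    have e1 : ‖star v * v‖ * ‖star v * v‖ = ‖star v * v‖ := by
      conv_lhs => rw [← CStarRing.norm_star_mul_self (x := star v * v), hss, hs2]
    have e2 : ‖v‖ * ‖v‖ = ‖star v * v‖ := (CStarRing.norm_star_mul_self (x := v)).symm
    by_contra h
    push_neg at h
    have ha : 1 < ‖star v * v‖ := by nlinarith [norm_nonneg v]
    nlinarith
  -- ‖A‖ ≤ c
  have hAnorm : ‖A‖ ≤ c := by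
    apply ContinuousLinearMap.opNorm_le_bound _ hcpos.le
    intro ξ
    rw [hAΦ ξ]
    calc ‖Φ (ξ * star v)‖ ≤ ‖Φ‖ * ‖ξ * star v‖ := Φ.le_opNorm _
    _ ≤ c * (‖ξ‖ * ‖star v‖) := by rw [hΦnorm]; gcongr; exact norm_mul_le _ _
    _ ≤ c * (‖ξ‖ * 1) := by gcongr; rwa [norm_star]
    _ = c * ‖ξ‖ := by ring_nf
  -- A 1 = c
  have hA1pos : 0 ≤ A 1 := by
    have := hApos 1
    rwa [star_one, one_mul] at this
  have hA1re : c ≤ (A 1).re := by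
    have hb : ∀ ξ : M, ‖Φ ξ‖ ≤ Real.sqrt ((A 1).re * c) * ‖ξ‖ := by
      intro ξ
      have h := cs A hApos 1 (ξ * v)
      rw [star_one, one_mul, one_mul] at h
      have h2 : (A (star (ξ * v) * (ξ * v))).re ≤ c * ‖ξ‖ ^ 2 := by
        calc (A (star (ξ * v) * (ξ * v))).re ≤ ‖A (star (ξ * v) * (ξ * v))‖ :=
              Complex.re_le_norm _
        _ ≤ ‖A‖ * ‖star (ξ * v) * (ξ * v)‖ := A.le_opNorm _
        _ = ‖A‖ * (‖ξ * v‖ * ‖ξ * v‖) := by rw [CStarRing.norm_star_mul_self]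
        _ ≤ c * (‖ξ‖ * ‖ξ‖) := by
            apply mul_le_mul hAnorm _ (by positivity) hcpos.le
            calc ‖ξ * v‖ * ‖ξ * v‖ ≤ (‖ξ‖ * ‖v‖) * (‖ξ‖ * ‖v‖) := by
                  have := norm_mul_le ξ v
                  nlinarith [norm_nonneg (ξ * v), norm_nonneg ξ, norm_nonneg v]
            _ ≤ (‖ξ‖ * 1) * (‖ξ‖ * 1) := by
                  have h0 := norm_nonneg ξ
                  nlinarith [mul_le_mul hvle hvle (norm_nonneg v) zero_le_one,
                    mul_nonneg h0 h0]
            _ = ‖ξ‖ * ‖ξ‖ := by ring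
        _ = c * ‖ξ‖ ^ 2 := by ring
      have h3 : ‖Φ ξ‖ ^ 2 ≤ ((A 1).re * c) * ‖ξ‖ ^ 2 := by
        rw [hΦA ξ]
        calc ‖A (ξ * v)‖ ^ 2 ≤ (A 1).re * (A (star (ξ * v) * (ξ * v))).re := h
        _ ≤ (A 1).re * (c * ‖ξ‖ ^ 2) := mul_le_mul_of_nonneg_left h2 (pos_re hA1pos)
        _ = ((A 1).re * c) * ‖ξ‖ ^ 2 := by ring
      have h4 : Real.sqrt (‖Φ ξ‖ ^ 2) ≤ Real.sqrt (((A 1).re * c) * ‖ξ‖ ^ 2) :=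
        Real.sqrt_le_sqrt h3
      rwa [Real.sqrt_sq (norm_nonneg _), Real.sqrt_mul (mul_nonneg (pos_re hA1pos) hcpos.le), Real.sqrt_sq
        (norm_nonneg _)] at h4
    have h5 : ‖Φ‖ ≤ Real.sqrt ((A 1).re * c) :=
      ContinuousLinearMap.opNorm_le_bound _ (Real.sqrt_nonneg _) hb
    rw [hΦnorm] at h5
    have h6 : c ^ 2 ≤ (A 1).re * c := by
      have := Real.sq_sqrt (show (0:ℝ) ≤ (A 1).re * c from
        mul_nonneg (pos_re hA1pos) hcpos.le)
      nlinarith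
    nlinarith
  have hA1 : A 1 = (c : ℂ) := by
    have hle : (A 1).re ≤ c := by
      calc (A 1).re ≤ ‖A 1‖ := Complex.re_le_norm _
      _ ≤ ‖A‖ * ‖(1 : M)‖ := A.le_opNorm _
      _ = ‖A‖ := by rw [hone, mul_one]
      _ ≤ c := hAnorm
    refine Complex.ext ?_ (pos_im hA1pos)
    simp only [Complex.ofReal_re]
    linarith
  -- Φ (v*) = c
  have hΦv : Φ (star v) = (c : ℂ) := by
    rw [hΦA (star v)]
    have := hAs 1
    rw [one_mul] at this
    rw [this, hA1]
  -- ω (v* v) = c and ω (1 - v* v) = 0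
  have hωsp : 0 ≤ ω (star v * v) := hωpos v
  have hnc : ‖((c:ℝ):ℂ)‖ = c := by
    rw [Complex.norm_real, Real.norm_eq_abs]; exact abs_of_pos hcpos
  have hωsre : c ≤ (ω (star v * v)).re := by
    have h := hSchwarz (star v)
    rw [star_star, hΦv, hnc, pos_norm hωsp] at h
    nlinarith
  have hω1pos : 0 ≤ ω (1 - star v * v) := by
    have := hωpos (1 - star v * v)
    rwa [h1ss] at this
  have hω1re : (ω 1).re ≤ c := by
    calc (ω 1).re ≤ ‖ω 1‖ := Complex.re_le_norm _
    _ ≤ ‖ω‖ * ‖(1 : M)‖ := ω.le_opNorm _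
    _ = c := by rw [hωnorm, hone, mul_one]
  have hsum : (ω 1).re = (ω (star v * v)).re + (ω (1 - star v * v)).re := by
    have : ω 1 = ω (star v * v) + ω (1 - star v * v) := by
      rw [← map_add]
      congr 1
      abel
    rw [this, Complex.add_re]
  have hωs : ω (star v * v) = ((c:ℝ):ℂ) := by
    refine Complex.ext ?_ (pos_im hωsp)
    simp only [Complex.ofReal_re]
    have := pos_re hω1pos
    linarith
  have hω1s : ω (1 - star v * v) = 0 := by
    refine Complex.ext ?_ (pos_im hω1pos)
    simp only [Complex.zero_re]
    have := pos_re hω1pos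
    linarith
  have hωes : ∀ ξ : M, ω (ξ * (star v * v)) = ω ξ := by
    intro ξ
    have h0 : ω (star (1 - star v * v) * (1 - star v * v)) = 0 := by
      rw [h1ss]; exact hω1s
    have h := mul_right_zero ω hωpos h0 ξ
    rw [mul_sub, mul_one, map_sub, sub_eq_zero] at h
    exact h.symm
  have hωherm := herm ω hωpos
  -- key step: ω (η v) = 0 → Φ η = 0
  have hη : ∀ η : M, ω (η * v) = 0 → Φ η = 0 := by
    intro η hη0
    set z := Φ η with hzdef
    have hbpos : 0 ≤ ω (η * star η) := by
      have := hωpos (star η); rwa [star_star] at this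
    set b := (ω (η * star η)).re with hbdef
    have hb0 : 0 ≤ b := pos_re hbpos
    set nz := Complex.normSq z with hnzdef
    have hnz0 : 0 ≤ nz := Complex.normSq_nonneg z
    have key2 : ∀ r : ℝ, 0 < r → 2 * c * nz ≤ (c * nz * b) * r := by
      intro r hr
      set t : ℂ := (r : ℂ) * starRingEnd ℂ z with htdef
      have hsch := hSchwarz (star v + t • η)
      have hL : Φ (star v + t • η) = ((c + r * nz : ℝ) : ℂ) := by
        rw [map_add, map_smul, smul_eq_mul, hΦv]
        have e : t * z = ((r * nz : ℝ) : ℂ) := by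
          rw [htdef, mul_assoc, mul_comm (starRingEnd ℂ z) z, Complex.mul_conj, hnzdef]
          push_cast; ring
        rw [← hzdef, e]
        push_cast; ring
      have hexp : (star v + t • η) * star (star v + t • η)
          = star v * v + (starRingEnd ℂ t) • (star v * star η) + t • (η * v)
            + (starRingEnd ℂ t * t) • (η * star η) := by
        rw [star_add, star_star, star_smul]
        simp only [add_mul, mul_add, smul_add, smul_mul_assoc, mul_smul_comm, smul_smul,
          Complex.star_def]
        abel
      have hR : ω ((star v + t • η) * star (star v + t • η))
          = ((c + r ^ 2 * nz * b : ℝ) : ℂ) := by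
        rw [hexp]
        simp only [map_add, map_smul, smul_eq_mul]
        have hconj : ω (star v * star η) = 0 := by
          have e : star v * star η = star (η * v) := by rw [star_mul]
          rw [e, hωherm, hη0, map_zero]
        have htt : starRingEnd ℂ t * t = ((r ^ 2 * nz : ℝ) : ℂ) := by
          rw [mul_comm, Complex.mul_conj, htdef, Complex.normSq_mul, Complex.normSq_conj,
            Complex.normSq_ofReal, hnzdef]
          push_cast; ring
        have hbb : ω (η * star η) = ((b : ℝ) : ℂ) := by
          rw [hbdef]; exact pos_eq_re hbpos
        rw [hωs, hη0, hconj, htt, hbb]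
        push_cast; ring
      rw [hL, hR] at hsch
      have hnL : ‖((c + r * nz : ℝ) : ℂ)‖ = c + r * nz := by
        rw [Complex.norm_real, Real.norm_eq_abs]
        exact abs_of_nonneg (by nlinarith)
      have hnR : ‖((c + r ^ 2 * nz * b : ℝ) : ℂ)‖ = c + r ^ 2 * nz * b := by
        rw [Complex.norm_real, Real.norm_eq_abs]
        exact abs_of_nonneg (add_nonneg hcpos.le
          (mul_nonneg (mul_nonneg (sq_nonneg r) hnz0) hb0))
      rw [hnL, hnR] at hsch
      have h1 : (2 * c * nz) * r ≤ ((c * nz * b) * r) * r := by nlinarith [sq_nonneg (r * nz)]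
      exact le_of_mul_le_mul_right h1 hr
    have hnzz : nz = 0 := by
      by_contra hne
      have hpos' : 0 < nz := lt_of_le_of_ne hnz0 (Ne.symm hne)
      have hKpos : (0:ℝ) < c * nz * b + 1 := by
        have := mul_nonneg (mul_nonneg hcpos.le hnz0) hb0
        linarith
      have hr : 0 < (c * nz) / (c * nz * b + 1) := div_pos (mul_pos hcpos hpos') hKpos
      have h := key2 _ hr
      have hb1 : (c * nz * b) / (c * nz * b + 1) ≤ 1 := by
        rw [div_le_one hKpos]; linarith
      have h2 : (c * nz * b) * ((c * nz) / (c * nz * b + 1)) ≤ c * nz := by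
        calc (c * nz * b) * ((c * nz) / (c * nz * b + 1))
            = ((c * nz * b) / (c * nz * b + 1)) * (c * nz) := by ring
        _ ≤ 1 * (c * nz) := mul_le_mul_of_nonneg_right hb1 (mul_nonneg hcpos.le hnz0)
        _ = c * nz := one_mul _
      nlinarith [mul_pos hcpos hpos']
    exact Complex.normSq_eq_zero.mp hnzz
  -- Φ ξ = ω (ξ v)
  have hcne : ((c:ℝ):ℂ) ≠ 0 := by
    simpa using hc
  have hΦω : ∀ ξ : M, Φ ξ = ω (ξ * v) := by
    intro ξ
    have hη0 : ω ((ξ - (ω (ξ * v) / c) • star v) * v) = 0 := by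
      rw [sub_mul, smul_mul_assoc, map_sub, map_smul, smul_eq_mul, hωs]
      field_simp; simp
    have h := hη _ hη0
    rw [map_sub, map_smul, smul_eq_mul, hΦv, sub_eq_zero] at h
    rw [h]
    field_simp
  -- conclusion
  ext ξ
  rw [hAΦ ξ, hΦω (ξ * star v), mul_assoc, hωes]


/-- uniqueness of the absolute value, Takesaki III.4.6:
if `ω` is a positive functional on `T**` with `‖ω‖ = ‖φ‖` and
`|φ̂(ξ)|² ≤ ‖φ‖ ω(ξξ*)` for all `ξ ∈ T**`, then `ω = |φ|`. -/
theorem stmt0 {T M : Type*} [NormedRing T] [StarRing T] [CStarRing T]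
    [NormedAlgebra ℂ T] [StarModule ℂ T] [CompleteSpace T]
    [NormedRing M] [StarRing M] [CStarRing M]
    [NormedAlgebra ℂ M] [StarModule ℂ M] [CompleteSpace M]
    (B : BidualSetup T M) (φ : T →L[ℂ] ℂ) (ω : M →L[ℂ] ℂ)
    (hωpos : ∀ ξ : M, 0 ≤ ω (star ξ * ξ))
    (hωnorm : ‖ω‖ = ‖φ‖)
    (hSchwarz : ∀ ξ : M, ‖B.hat φ ξ‖ ^ 2 ≤ ‖φ‖ * ‖ω (ξ * star ξ)‖) :
    ω = B.absVal φ := by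
  obtain ⟨hv, hApos, hΦA, hker⟩ := B.polar φ
  exact core (B.hat φ) (B.absVal φ) ω (B.pIso φ) ‖φ‖ hv hApos hΦA hker
    (B.hat_norm φ) hωpos hωnorm hSchwarz
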